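/- Let P ⊆ ℝ^2 be finite, each site present independently (unipoint model), and let T = {x ∈ ℝ^2 : τ(x, P) ≥ t_0} be the Tukey region of depth t_0. For a query point q ∉ T, let ℓ_1, ℓ_2 be the two tangent lines of T from q, and P_q = P ∩ (ℓ_1^- ∪ ℓ_2^-) where ℓ_i^- is the halfplane bounded by ℓ_i not containing T. Then |P_q| ≤ 4·t_0. -/

import Mathlib

open scoped RealInnerProductSpace
attribute [local instance] Classical.propDecidable

noncomputable section

abbrev E2 := EuclideanSpace ℝ (Fin 2)

/-- Tukey depth of `p` with respect to a finite planar set `Q`. -/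
def tukeyDepth (Q : Finset E2) (p : E2) : ℕ :=
  sInf {n : ℕ | ∃ v : E2, v ≠ 0 ∧ ∃ c : ℝ,
    c ≤ ⟪v, p⟫ ∧ n = (Q.filter fun x => c ≤ ⟪v, x⟫).card}

/-- rotation by 90 degrees -/
def rotE (v : E2) : E2 := WithLp.toLp 2 ![-(v 1), v 0]

lemma inner_coords (x y : E2) : ⟪x, y⟫ = x 0 * y 0 + x 1 * y 1 := by
  simp [PiLp.inner_apply, RCLike.inner_apply, Fin.sum_univ_two]
  ring

lemma planar_identity (v w z : E2) :
    ⟪v, v⟫ * ⟪w, z⟫ = ⟪w, v⟫ * ⟪v, z⟫ + ⟪w, rotE v⟫ * ⟪rotE v, z⟫ := by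
  simp only [inner_coords, rotE]
  simp only [PiLp.toLp_apply, Matrix.cons_val_zero, Matrix.cons_val_one, Matrix.head_cons]
  ring

lemma depth_le_card (Q : Finset E2) (p : E2) (v : E2) (hv : v ≠ 0) (c : ℝ)
    (hc : c ≤ ⟪v, p⟫) :
    tukeyDepth Q p ≤ (Q.filter fun x => c ≤ ⟪v, x⟫).card :=
  Nat.sInf_le ⟨v, hv, c, hc, rfl⟩

lemma depth_set_nonempty (Q : Finset E2) (p : E2) :
    {n : ℕ | ∃ v : E2, v ≠ 0 ∧ ∃ c : ℝ,
      c ≤ ⟪v, p⟫ ∧ n = (Q.filter fun x => c ≤ ⟪v, x⟫).card}.Nonempty := by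
  refine ⟨_, EuclideanSpace.single 0 (1:ℝ), ?_, ⟪EuclideanSpace.single 0 (1:ℝ), p⟫,
    le_refl _, rfl⟩
  intro h
  have h1 := congrArg (fun z : E2 => z 0) h
  simp at h1

lemma exists_small_halfplane (Q : Finset E2) (p : E2) (t : ℕ) (h : tukeyDepth Q p < t) :
    ∃ w : E2, w ≠ 0 ∧ ∃ d : ℝ, d ≤ ⟪w, p⟫ ∧ (Q.filter fun x => d ≤ ⟪w, x⟫).card < t := by
  have hmem := Nat.sInf_mem (depth_set_nonempty Q p)
  obtain ⟨v, hv, c, hc, hcard⟩ := hmem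
  refine ⟨v, hv, c, hc, ?_⟩
  rw [← hcard]
  exact h

lemma exists_median (B : Finset E2) (f : E2 → ℝ) (k : ℕ) (hk : 1 ≤ k)
    (h : 2 * k - 1 ≤ B.card) :
    ∃ q ∈ B, k ≤ (B.filter fun r => f r ≤ f q).card ∧
      k ≤ (B.filter fun r => f q ≤ f r).card := by
  have hB : B.Nonempty := Finset.card_pos.mp (by omega)
  set C := B.filter (fun q => (B.filter fun r => f r < f q).card ≤ k - 1) with hC
  have hCne : C.Nonempty := by
    obtain ⟨q₀, hq₀, hmin⟩ := B.exists_min_image f hB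
    refine ⟨q₀, Finset.mem_filter.mpr ⟨hq₀, ?_⟩⟩
    have hempty : (B.filter fun r => f r < f q₀) = ∅ := by
      apply Finset.filter_false_of_mem
      intro r hr
      exact not_lt.mpr (hmin r hr)
    simp [hempty]
  obtain ⟨q, hqC, hqmax⟩ := C.exists_max_image f hCne
  have hqB : q ∈ B := (Finset.mem_filter.mp hqC).1
  have hlt : (B.filter fun r => f r < f q).card ≤ k - 1 := (Finset.mem_filter.mp hqC).2
  have hsplit : (B.filter fun r => f q ≤ f r) = B \ (B.filter fun r => f r < f q) := by
    ext r
    simp only [Finset.mem_filter, Finset.mem_sdiff, not_and, not_lt]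
    constructor
    · rintro ⟨h1, h2⟩; exact ⟨h1, fun _ => h2⟩
    · rintro ⟨h1, h2⟩; exact ⟨h1, h2 h1⟩
  have h2 : k ≤ (B.filter fun r => f q ≤ f r).card := by
    rw [hsplit, Finset.card_sdiff_of_subset (Finset.filter_subset _ _)]
    omega
  refine ⟨q, hqB, ?_, h2⟩
  by_contra hcon
  push_neg at hcon
  have hsplit2 : (B.filter fun r => f q < f r) = B \ (B.filter fun r => f r ≤ f q) := by
    ext r
    simp only [Finset.mem_filter, Finset.mem_sdiff, not_and, not_le]
    constructor
    · rintro ⟨h1, h2⟩; exact ⟨h1, fun _ => h2⟩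
    · rintro ⟨h1, h2⟩; exact ⟨h1, h2 h1⟩
  have hDcard : k ≤ (B.filter fun r => f q < f r).card := by
    rw [hsplit2, Finset.card_sdiff_of_subset (Finset.filter_subset _ _)]
    omega
  have hDne : (B.filter fun r => f q < f r).Nonempty := Finset.card_pos.mp (by omega)
  obtain ⟨q', hq', hmin'⟩ := Finset.exists_min_image _ f hDne
  have hq'B : q' ∈ B := (Finset.mem_filter.mp hq').1
  have hq'gt : f q < f q' := (Finset.mem_filter.mp hq').2
  have hq'C : q' ∈ C := by
    refine Finset.mem_filter.mpr ⟨hq'B, ?_⟩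
    have hsub : (B.filter fun r => f r < f q') ⊆ (B.filter fun r => f r ≤ f q) := by
      intro r hr
      obtain ⟨hrB, hrlt⟩ := Finset.mem_filter.mp hr
      refine Finset.mem_filter.mpr ⟨hrB, ?_⟩
      by_contra hgt
      push_neg at hgt
      have := hmin' r (Finset.mem_filter.mpr ⟨hrB, hgt⟩)
      linarith
    have := Finset.card_le_card hsub
    omega
  exact absurd (hqmax q' hq'C) (not_le.mpr hq'gt)

set_option maxHeartbeats 1000000 in
/-- Key lemma: the open halfplane strictly beyond a supporting line of the
Tukey region contains at most `2 t₀ - 2` points. -/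
lemma side_bound (P : Finset E2) (t₀ : ℕ) (ht : 1 ≤ t₀) (v : E2) (hv : v ≠ 0) (c : ℝ)
    (x : E2) (hx : t₀ ≤ tukeyDepth P x) (hxc : ⟪v, x⟫ = c)
    (hout : ∀ y : E2, ⟪v, y⟫ < c → tukeyDepth P y < t₀) :
    (P.filter fun p => ⟪v, p⟫ < c).card ≤ 2 * t₀ - 2 := by
  by_contra hcard
  push_neg at hcard
  set B := P.filter fun p => ⟪v, p⟫ < c with hBdef
  have hBcard : 2 * t₀ - 1 ≤ B.card := by omega
  have hBne : B.Nonempty := Finset.card_pos.mp (by omega)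
  set u := rotE v with hu
  -- coordinates relative to x
  set α : E2 → ℝ := fun p => c - ⟪v, p⟫ with hα
  set β : E2 → ℝ := fun p => ⟪u, p⟫ - ⟪u, x⟫ with hβ
  have hαpos : ∀ p ∈ B, 0 < α p := by
    intro p hp
    have := (Finset.mem_filter.mp hp).2
    simp only [hα]
    linarith
  -- minimum of α over B
  obtain ⟨qm, hqmB, hqmmin⟩ := B.exists_min_image α hBne
  have hαm : 0 < α qm := hαpos qm hqmB
  -- median w.r.t. slopes
  set f : E2 → ℝ := fun p => β p / α p with hf
  obtain ⟨qs, hqsB, hmed1, hmed2⟩ := exists_median B f t₀ ht hBcard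
  have hαs : 0 < α qs := hαpos qs hqsB
  -- the probe point y
  set lam : ℝ := α qm / α qs with hlam
  have hlampos : 0 < lam := div_pos hαm hαs
  set y : E2 := x + lam • (qs - x) with hy
  have hinner_y : ∀ w : E2, ⟪w, y⟫ = ⟪w, x⟫ + lam * ⟪w, qs - x⟫ := by
    intro w
    rw [hy, inner_add_right, real_inner_smul_right]
  have hvqs : ⟪v, qs - x⟫ = -(α qs) := by
    simp [inner_sub_right, hxc, hα]
  have hyout : ⟪v, y⟫ < c := by
    rw [hinner_y, hvqs, hxc]
    have : lam * α qs = α qm := div_mul_cancel₀ _ (ne_of_gt hαs)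
    nlinarith
  obtain ⟨w, hw, d, hd, hsmall⟩ := exists_small_halfplane P y t₀ (hout y hyout)
  -- x is not in the small halfplane
  have hxw : ⟪w, x⟫ < d := by
    by_contra hge
    push_neg at hge
    have := depth_le_card P x w hw d hge
    omega
  have hqspos : 0 < ⟪w, qs - x⟫ := by
    have h1 : ⟪w, x⟫ + lam * ⟪w, qs - x⟫ ≥ d := by rw [← hinner_y]; exact hd
    nlinarith
  -- decomposition of inner products
  have hN : 0 < ⟪v, v⟫ := by
    have hne : v 0 ≠ 0 ∨ v 1 ≠ 0 := by
      by_contra hcc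
      push_neg at hcc
      apply hv
      ext i
      fin_cases i
      · exact hcc.1
      · exact hcc.2
    rw [inner_coords]
    rcases hne with hne | hne
    · nlinarith [mul_self_pos.mpr hne, mul_self_nonneg (v 1)]
    · nlinarith [mul_self_pos.mpr hne, mul_self_nonneg (v 0)]
  set N : ℝ := ⟪v, v⟫ with hNdef
  have hdecomp : ∀ p : E2, N * ⟪w, p - x⟫ = (-⟪w, v⟫) * α p + ⟪w, u⟫ * β p := by
    intro p
    have := planar_identity v w (p - x)
    rw [this]
    have h1 : ⟪v, p - x⟫ = -(α p) := by simp [inner_sub_right, hxc, hα]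
    have h2 : ⟪u, p - x⟫ = β p := by simp [inner_sub_right, hβ]
    rw [h1, h2, ← hu]
    ring
  set a : ℝ := -⟪w, v⟫ with ha
  set b : ℝ := ⟪w, u⟫ with hb
  have hstar : 0 < a * α qs + b * β qs := by
    have h0 := mul_pos hN hqspos
    rw [hdecomp qs] at h0
    exact h0
  -- main covering claim depending on the sign of b
  have hkey : ∀ p ∈ B, (0 ≤ b ∧ f qs ≤ f p) ∨ (b < 0 ∧ f p ≤ f qs) → d ≤ ⟪w, p⟫ := by
    intro p hpB hcase
    have hαp : 0 < α p := hαpos p hpB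
    have hαmle : α qm ≤ α p := hqmmin p hpB
    have hcross : a * α p + b * β p ≥ (a * α qs + b * β qs) * (α qm / α qs) := by
      rcases hcase with ⟨hbpos, hslope⟩ | ⟨hbneg, hslope⟩
      · have : β qs * α p ≤ β p * α qs := by
          have := (div_le_div_iff₀ hαs hαp).mp hslope
          linarith
        rw [ge_iff_le, ← mul_div_assoc, div_le_iff₀ hαs]
        nlinarith [mul_nonneg hbpos (sub_nonneg.mpr this),
          mul_nonneg (le_of_lt hstar) (sub_nonneg.mpr hαmle)]
      · have : β p * α qs ≤ β qs * α p := by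
          have := (div_le_div_iff₀ hαp hαs).mp hslope
          linarith
        rw [ge_iff_le, ← mul_div_assoc, div_le_iff₀ hαs]
        nlinarith [mul_nonneg (neg_nonneg.mpr (le_of_lt hbneg)) (sub_nonneg.mpr this),
          mul_nonneg (le_of_lt hstar) (sub_nonneg.mpr hαmle)]
    -- translate back to inner products
    have hNp := hdecomp p
    have hNs := hdecomp qs
    have hwp : ⟪w, p - x⟫ ≥ lam * ⟪w, qs - x⟫ := by
      have hq1 : N * ⟪w, p - x⟫ ≥ (N * ⟪w, qs - x⟫) * lam := by
        rw [hNp, hNs, hlam]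
        exact hcross
      have hq2 : ⟪w, p - x⟫ ≥ ⟪w, qs - x⟫ * lam := by
        nlinarith
      linarith [hq2]
    have hyd : d ≤ ⟪w, x⟫ + lam * ⟪w, qs - x⟫ := by rw [← hinner_y]; exact hd
    have : ⟪w, p⟫ = ⟪w, x⟫ + ⟪w, p - x⟫ := by simp [inner_sub_right]
    linarith
  -- derive the contradiction
  rcases le_or_gt 0 b with hbpos | hbneg
  · have hsub : (B.filter fun r => f qs ≤ f r) ⊆ P.filter fun p => d ≤ ⟪w, p⟫ := by
      intro r hr
      obtain ⟨hrB, hrf⟩ := Finset.mem_filter.mp hr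
      exact Finset.mem_filter.mpr ⟨(Finset.mem_filter.mp hrB).1,
        hkey r hrB (Or.inl ⟨hbpos, hrf⟩)⟩
    have := Finset.card_le_card hsub
    omega
  · have hsub : (B.filter fun r => f r ≤ f qs) ⊆ P.filter fun p => d ≤ ⟪w, p⟫ := by
      intro r hr
      obtain ⟨hrB, hrf⟩ := Finset.mem_filter.mp hr
      exact Finset.mem_filter.mpr ⟨(Finset.mem_filter.mp hrB).1,
        hkey r hrB (Or.inr ⟨hbneg, hrf⟩)⟩
    have := Finset.card_le_card hsub
    omega

/-- For a query `q` outside the Tukey region `T` of depth `t₀`, the set `P_q` of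
sites in the union of the two tangent halfplanes from `q` (the sides not
containing `T`) has at most `4·t₀` points. -/
theorem tangent_halfplanes_card_le
    (P : Finset E2) (t₀ : ℕ) (q : E2)
    (T : Set E2) (hT : T = {x : E2 | t₀ ≤ tukeyDepth P x})
    (hq : q ∉ T)
    (v₁ v₂ : E2) (c₁ c₂ : ℝ) (hv₁ : v₁ ≠ 0) (hv₂ : v₂ ≠ 0)
    (hq₁ : ⟪v₁, q⟫ = c₁) (hq₂ : ⟪v₂, q⟫ = c₂)
    (hside₁ : ∀ x ∈ T, c₁ ≤ ⟪v₁, x⟫) (hside₂ : ∀ x ∈ T, c₂ ≤ ⟪v₂, x⟫)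
    (htan₁ : ∃ x ∈ T, ⟪v₁, x⟫ = c₁) (htan₂ : ∃ x ∈ T, ⟪v₂, x⟫ = c₂) :
    (P.filter fun p => ⟪v₁, p⟫ < c₁ ∨ ⟪v₂, p⟫ < c₂).card ≤ 4 * t₀ := by
  rcases Nat.eq_zero_or_pos t₀ with ht0 | ht0
  · exfalso
    apply hq
    rw [hT, ht0]
    simp
  obtain ⟨x₁, hx₁T, hx₁c⟩ := htan₁
  obtain ⟨x₂, hx₂T, hx₂c⟩ := htan₂
  have hx₁ : t₀ ≤ tukeyDepth P x₁ := by rw [hT] at hx₁T; exact hx₁T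
  have hx₂ : t₀ ≤ tukeyDepth P x₂ := by rw [hT] at hx₂T; exact hx₂T
  have hout₁ : ∀ y : E2, ⟪v₁, y⟫ < c₁ → tukeyDepth P y < t₀ := by
    intro y hy
    by_contra hge
    push_neg at hge
    have : y ∈ T := by rw [hT]; exact hge
    exact absurd (hside₁ y this) (not_le.mpr hy)
  have hout₂ : ∀ y : E2, ⟪v₂, y⟫ < c₂ → tukeyDepth P y < t₀ := by
    intro y hy
    by_contra hge
    push_neg at hge
    have : y ∈ T := by rw [hT]; exact hge
    exact absurd (hside₂ y this) (not_le.mpr hy)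
  have h₁ := side_bound P t₀ ht0 v₁ hv₁ c₁ x₁ hx₁ hx₁c hout₁
  have h₂ := side_bound P t₀ ht0 v₂ hv₂ c₂ x₂ hx₂ hx₂c hout₂
  have hunion : (P.filter fun p => ⟪v₁, p⟫ < c₁ ∨ ⟪v₂, p⟫ < c₂)
      = (P.filter fun p => ⟪v₁, p⟫ < c₁) ∪ (P.filter fun p => ⟪v₂, p⟫ < c₂) :=
    Finset.filter_or _ _ _
  rw [hunion]
  have := Finset.card_union_le (P.filter fun p => ⟪v₁, p⟫ < c₁)
    (P.filter fun p => ⟪v₂, p⟫ < c₂)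
  omega
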